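/- Let k > 4 be an integer and let U₁, U₂, U₃, V₂, V₃ ⊆ ℝ³ be the pieces of the surfaces of Example 1. There exist ε > 0 and constants c₁, c₂ > 0 such that for every point p = (x,y,t) ∈ U₂ ∪ U₃ ∪ V₂ ∪ V₃ with 0 < t ≤ ε, one has c₁·t ≤ dist(p, U₁) ≤ c₂·t, where dist(p, U₁) denotes the infimum of Euclidean distances from p to points of U₁. -/
import Mathlib


open Set Metric

noncomputable section

/-- The piece `U₁` of Example 1 (coordinates `x = p 0`, `y = p 1`, `t = p 2`). -/
def PieceU1 (k : ℕ) : Set (EuclideanSpace ℝ (Fin 3)) :=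
  {p | ((p 0 - p 2) ^ 2 + p 1 ^ 2 - p 2 ^ 2) * ((p 0 + p 2) ^ 2 + p 1 ^ 2 - p 2 ^ 2) = p 2 ^ k ∧
        0 ≤ p 2}

/-- The cone `U₂` over the circle `(x-1)² + (y-1/2)² = 1/16`. -/
def PieceU2 : Set (EuclideanSpace ℝ (Fin 3)) :=
  {p | (p 0 - p 2) ^ 2 + (p 1 - p 2 / 2) ^ 2 = p 2 ^ 2 / 16 ∧ 0 ≤ p 2}

/-- The cone `U₃` over the circle `(x-1)² + (y+1/2)² = 1/16`. -/
def PieceU3 : Set (EuclideanSpace ℝ (Fin 3)) :=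
  {p | (p 0 - p 2) ^ 2 + (p 1 + p 2 / 2) ^ 2 = p 2 ^ 2 / 16 ∧ 0 ≤ p 2}

/-- The cone `V₂` over the circle `(x-1)² + y² = 1/16`. -/
def PieceV2 : Set (EuclideanSpace ℝ (Fin 3)) :=
  {p | (p 0 - p 2) ^ 2 + p 1 ^ 2 = p 2 ^ 2 / 16 ∧ 0 ≤ p 2}

/-- The cone `V₃` over the circle `(x+1)² + y² = 1/16`. -/
def PieceV3 : Set (EuclideanSpace ℝ (Fin 3)) :=
  {p | (p 0 + p 2) ^ 2 + p 1 ^ 2 = p 2 ^ 2 / 16 ∧ 0 ≤ p 2}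

lemma signFlipAux (x y t X Y T : ℝ) (ht : 0 < t)
    (h1 : (x - t)^2 + y^2 ≤ 9/16 * t^2)
    (hx : 3/4 * t ≤ x)
    (hdx : |X - x| ≤ t/1000) (hdy : |Y - y| ≤ t/1000) (hdt : |T - t| ≤ t/1000) :
    ((X - T)^2 + Y^2 - T^2) * ((X + T)^2 + Y^2 - T^2) < 0 := by
  rw [abs_le] at hdx hdy hdt
  have hxt : |x - t| ≤ 3/4 * t := by
    rw [abs_le]; constructor <;> nlinarith [sq_nonneg y, sq_nonneg (x - t)]
  have hy : |y| ≤ 3/4 * t := by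
    rw [abs_le]; constructor <;> nlinarith [sq_nonneg (x - t), sq_nonneg y]
  rw [abs_le] at hxt hy
  have hA : (X - T)^2 + Y^2 - T^2 < 0 := by
    nlinarith [sq_nonneg (X - x - (T - t)), sq_nonneg (Y - y), sq_nonneg (T - t)]
  have hB : 0 < (X + T)^2 + Y^2 - T^2 := by
    nlinarith [sq_nonneg (X + T - (x + t)), sq_nonneg (Y - y), sq_nonneg (T - t), sq_nonneg Y]
  exact mul_neg_of_neg_of_pos hA hB

set_option maxHeartbeats 1000000 in
/-- there exist `ε > 0` and constants `c₁, c₂ > 0` such that every point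
`p = (x,y,t) ∈ U₂ ∪ U₃ ∪ V₂ ∪ V₃` with `0 < t ≤ ε` satisfies
`c₁ · t ≤ dist(p, U₁) ≤ c₂ · t`. -/
theorem example1_distance_to_U1 (k : ℕ) (hk : 4 < k) :
    ∃ ε > (0 : ℝ), ∃ c₁ > (0 : ℝ), ∃ c₂ > (0 : ℝ),
      ∀ p ∈ PieceU2 ∪ PieceU3 ∪ PieceV2 ∪ PieceV3,
        0 < p 2 → p 2 ≤ ε →
          c₁ * p 2 ≤ Metric.infDist p (PieceU1 k) ∧
          Metric.infDist p (PieceU1 k) ≤ c₂ * p 2 := by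
  refine ⟨1, one_pos, 1/1000, by norm_num, 2, by norm_num, ?_⟩
  intro p hp ht _
  set x := p 0 with hx0
  set y := p 1 with hy0
  set t := p 2 with ht0
  -- extract the needed facts in each of the four cases
  have key : x^2 + y^2 ≤ 3 * t^2 ∧
      (∀ X Y T : ℝ, |X - x| ≤ t/1000 → |Y - y| ≤ t/1000 → |T - t| ≤ t/1000 →
        ((X - T)^2 + Y^2 - T^2) * ((X + T)^2 + Y^2 - T^2) < 0) := by
    rcases hp with ((h | h) | h) | h
    · simp only [PieceU2, mem_setOf_eq] at h
      obtain ⟨hc, -⟩ := h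
      have hb1 : (x - t)^2 + y^2 ≤ 9/16 * t^2 := by nlinarith [sq_nonneg (x - t), sq_nonneg (y - t/2)]
      have hb2 : 3/4 * t ≤ x := by nlinarith [sq_nonneg (y - t/2), sq_nonneg (x - t)]
      refine ⟨by nlinarith [sq_nonneg (x-t), sq_nonneg (y - t/2)], fun X Y T hdx hdy hdt => ?_⟩
      exact signFlipAux x y t X Y T ht hb1 hb2 hdx hdy hdt
    · simp only [PieceU3, mem_setOf_eq] at h
      obtain ⟨hc, -⟩ := h
      have hb1 : (x - t)^2 + y^2 ≤ 9/16 * t^2 := by nlinarith [sq_nonneg (x - t), sq_nonneg (y + t/2)]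
      have hb2 : 3/4 * t ≤ x := by nlinarith [sq_nonneg (y + t/2), sq_nonneg (x - t)]
      refine ⟨by nlinarith [sq_nonneg (x-t), sq_nonneg (y + t/2)], fun X Y T hdx hdy hdt => ?_⟩
      exact signFlipAux x y t X Y T ht hb1 hb2 hdx hdy hdt
    · simp only [PieceV2, mem_setOf_eq] at h
      obtain ⟨hc, -⟩ := h
      have hb1 : (x - t)^2 + y^2 ≤ 9/16 * t^2 := by nlinarith
      have hb2 : 3/4 * t ≤ x := by nlinarith [sq_nonneg y, sq_nonneg (x - t)]
      refine ⟨by nlinarith, fun X Y T hdx hdy hdt => ?_⟩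
      exact signFlipAux x y t X Y T ht hb1 hb2 hdx hdy hdt
    · simp only [PieceV3, mem_setOf_eq] at h
      obtain ⟨hc, -⟩ := h
      have hb1 : (-x - t)^2 + y^2 ≤ 9/16 * t^2 := by nlinarith
      have hb2 : 3/4 * t ≤ -x := by nlinarith [sq_nonneg y, sq_nonneg (x + t)]
      refine ⟨by nlinarith, fun X Y T hdx hdy hdt => ?_⟩
      have hdx' : |(-X) - (-x)| ≤ t/1000 := by rw [show (-X) - (-x) = -(X - x) by ring, abs_neg]; exact hdx
      have heq : ((X - T)^2 + Y^2 - T^2) * ((X + T)^2 + Y^2 - T^2)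
          = ((-X - T)^2 + Y^2 - T^2) * ((-X + T)^2 + Y^2 - T^2) := by ring
      rw [heq]
      exact signFlipAux (-x) y t (-X) Y T ht hb1 hb2 hdx' hdy hdt
  obtain ⟨hsum, hkey⟩ := key
  have h0mem : (0 : EuclideanSpace ℝ (Fin 3)) ∈ PieceU1 k := by
    simp only [PieceU1, mem_setOf_eq]
    norm_num
    rw [zero_pow (by omega : k ≠ 0)]
  have hne : (PieceU1 k).Nonempty := ⟨0, h0mem⟩
  constructor
  · -- lower bound
    by_contra hcon
    push_neg at hcon
    obtain ⟨q, hqmem, hqlt⟩ := (Metric.infDist_lt_iff hne).mp hcon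
    have coord : ∀ i : Fin 3, |p i - q i| ≤ dist p q := by
      intro i
      rw [EuclideanSpace.dist_eq]
      have h1 : |p i - q i| = Real.sqrt (dist (p i) (q i) ^ 2) := by
        rw [Real.dist_eq, Real.sqrt_sq_eq_abs, abs_abs]
      rw [h1]
      exact Real.sqrt_le_sqrt (Finset.single_le_sum (f := fun i => dist (p i) (q i) ^ 2) (fun j _ => sq_nonneg _) (Finset.mem_univ i))
    have hd : ∀ i : Fin 3, |p i - q i| ≤ t / 1000 := by
      intro i
      calc |p i - q i| ≤ dist p q := coord i
        _ ≤ t / 1000 := by linarith [hqlt]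
    have hdx : |q 0 - x| ≤ t/1000 := by
      rw [hx0, show q 0 - p 0 = -(p 0 - q 0) from by ring, abs_neg]; exact hd 0
    have hdy : |q 1 - y| ≤ t/1000 := by
      rw [hy0, show q 1 - p 1 = -(p 1 - q 1) from by ring, abs_neg]; exact hd 1
    have hdt : |q 2 - t| ≤ t/1000 := by
      rw [ht0, show q 2 - p 2 = -(p 2 - q 2) from by ring, abs_neg]; exact hd 2
    have hneg := hkey (q 0) (q 1) (q 2) hdx hdy hdt
    obtain ⟨hqeq, hqnn⟩ := hqmem
    rw [hqeq] at hneg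
    exact absurd hneg (not_lt.mpr (pow_nonneg hqnn k))
  · -- upper bound
    calc Metric.infDist p (PieceU1 k) ≤ dist p 0 := Metric.infDist_le_dist_of_mem h0mem
      _ ≤ 2 * t := by
        rw [dist_zero_right]
        have hnorm : ‖p‖ = Real.sqrt (x^2 + y^2 + t^2) := by
          rw [EuclideanSpace.norm_eq]
          congr 1
          simp [Fin.sum_univ_three, Real.norm_eq_abs, sq_abs, hx0, hy0, ht0]
        rw [hnorm]
        calc Real.sqrt (x^2 + y^2 + t^2) ≤ Real.sqrt ((2*t)^2) := by
              apply Real.sqrt_le_sqrt; nlinarith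
          _ = 2 * t := Real.sqrt_sq (by linarith)
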